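/- Let Z be an abelian group, let A ⊆ Z be finite and nonempty, let K ≥ 2 be the real number with |A − A| = K|A|, let 0 ≤ ε ≤ 1 and 0 ≤ β ≤ 1, and let T ⊆ A − A be a nonempty set with |T| ≥ K^{−ε}|A − A| and |A[t] − A| ≥ K^β |A| for all t ∈ T. Then there exist a real number α with α ≤ 1 + ε − β and a set X ⊆ A − A such that: (i) |{t ∈ T : x ∈ A[t] − A}| ≥ K^{α+β−ε} |A| for every x ∈ X; and (ii) |X| ≥ K^{−α} |A − A| / (4 log₂(4K²)). -/

import Mathlib

open Finset Pointwise
open scoped Classical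

/-- `A[t] = (A + t) ∩ A`. -/
def shiftInter {Z : Type*} [AddCommGroup Z] [DecidableEq Z] (A : Finset Z) (t : Z) : Finset Z :=
  (A.image (fun a => a + t)) ∩ A

private lemma sum_biUnion_le'' {ι α : Type*} [DecidableEq α] (s : Finset ι) (t : ι → Finset α)
    (f : α → ℕ) : ∑ x ∈ s.biUnion t, f x ≤ ∑ i ∈ s, ∑ x ∈ t i, f x := by
  classical
  induction s using Finset.induction_on with
  | empty => simp
  | insert _ _ hnotmem ih =>
    rename_i a s
    rw [Finset.biUnion_insert, Finset.sum_insert hnotmem]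
    have h1 := Finset.sum_union_inter (s₁ := t a) (s₂ := s.biUnion t) (f := f)
    omega

set_option maxHeartbeats 1000000 in
/-- If `|A − A| = K|A|` with `K ≥ 2`, and `T ⊆ A − A` is nonempty with `|T| ≥ K^{−ε}|A − A|`
and `|A[t] − A| ≥ K^β|A|` for all `t ∈ T`, then there are `α ≤ 1 + ε − β` and `X ⊆ A − A` with
`|{t ∈ T : x ∈ A[t] − A}| ≥ K^{α+β−ε}|A|` for every `x ∈ X`, and
`|X| ≥ K^{−α}|A − A|/(4 log₂(4K²))`. -/
theorem statement11 {Z : Type*} [AddCommGroup Z] [DecidableEq Z]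
    (A : Finset Z) (hA : A.Nonempty) (K : ℝ) (hK : 2 ≤ K)
    (hKdef : ((A - A).card : ℝ) = K * (A.card : ℝ))
    (ε β : ℝ) (hε0 : 0 ≤ ε) (hε1 : ε ≤ 1) (hβ0 : 0 ≤ β) (hβ1 : β ≤ 1)
    (T : Finset Z) (hT : T.Nonempty) (hTsub : T ⊆ A - A)
    (hTcard : K ^ (-ε) * ((A - A).card : ℝ) ≤ (T.card : ℝ))
    (hTbig : ∀ t ∈ T, K ^ β * (A.card : ℝ) ≤ (((shiftInter A t) - A).card : ℝ)) :
    ∃ (α : ℝ) (X : Finset Z), α ≤ 1 + ε - β ∧ X ⊆ A - A ∧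
      (∀ x ∈ X, K ^ (α + β - ε) * (A.card : ℝ) ≤
        ((T.filter (fun t => x ∈ (shiftInter A t) - A)).card : ℝ)) ∧
      K ^ (-α) * ((A - A).card : ℝ) / (4 * Real.logb 2 (4 * K ^ 2)) ≤ (X.card : ℝ) := by
  classical
  have hK0 : (0:ℝ) < K := by linarith
  have hK1 : (1:ℝ) < K := by linarith
  have hKne1 : K ≠ 1 := by linarith
  set n : ℝ := (A.card : ℝ) with hn_def
  have hn1 : (1:ℝ) ≤ n := by
    have h : 1 ≤ A.card := hA.card_pos
    rw [hn_def]
    exact_mod_cast h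
  have hn0 : (0:ℝ) < n := by linarith
  set S : Finset Z := A - A with hS_def
  set s : ℝ := (S.card : ℝ) with hs_def
  have hsKn : s = K * n := hKdef
  have hs0 : (0:ℝ) < s := by rw [hsKn]; positivity
  set f : Z → ℕ := fun x => (T.filter (fun t => x ∈ shiftInter A t - A)).card with hf_def
  have hDsub : ∀ t : Z, shiftInter A t - A ⊆ S := fun t =>
    Finset.sub_subset_sub Finset.inter_subset_right (Finset.Subset.refl A)
  -- double counting
  have hdouble : ∑ x ∈ S, f x = ∑ t ∈ T, (shiftInter A t - A).card := by
    calc ∑ x ∈ S, (T.filter (fun t => x ∈ shiftInter A t - A)).card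
        = ∑ x ∈ S, ∑ t ∈ T, if x ∈ shiftInter A t - A then 1 else 0 :=
          Finset.sum_congr rfl fun x _ => Finset.card_filter _ _
      _ = ∑ t ∈ T, ∑ x ∈ S, if x ∈ shiftInter A t - A then 1 else 0 := Finset.sum_comm
      _ = ∑ t ∈ T, (S.filter (fun x => x ∈ shiftInter A t - A)).card :=
          Finset.sum_congr rfl fun t _ => (Finset.card_filter _ _).symm
      _ = ∑ t ∈ T, (shiftInter A t - A).card := by
          refine Finset.sum_congr rfl fun t _ => ?_
          congr 1
          rw [Finset.filter_mem_eq_inter, Finset.inter_eq_right.mpr (hDsub t)]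
  have hP : (0:ℝ) < K ^ (β - ε) := Real.rpow_pos_of_pos hK0 _
  have htotal : K ^ (β - ε) * s * n ≤ ((∑ x ∈ S, f x : ℕ) : ℝ) := by
    have h1 : ∑ t ∈ T, (K ^ β * n) ≤ ∑ t ∈ T, ((shiftInter A t - A).card : ℝ) :=
      Finset.sum_le_sum fun t ht => hTbig t ht
    rw [Finset.sum_const, nsmul_eq_mul] at h1
    have h2 : K ^ (-ε) * s * (K ^ β * n) ≤ (T.card : ℝ) * (K ^ β * n) :=
      mul_le_mul_of_nonneg_right hTcard (by positivity)
    have hcast : ((∑ x ∈ S, f x : ℕ) : ℝ) = ∑ t ∈ T, ((shiftInter A t - A).card : ℝ) := by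
      rw [hdouble]; push_cast; rfl
    rw [hcast]
    calc K ^ (β - ε) * s * n = K ^ (-ε) * s * (K ^ β * n) := by
          rw [show β - ε = -ε + β by ring, Real.rpow_add hK0]; ring
      _ ≤ (T.card : ℝ) * (K ^ β * n) := h2
      _ ≤ _ := h1
  have hfle : ∀ x, (f x : ℝ) ≤ s := fun x => by
    have h1 : f x ≤ T.card := Finset.card_filter_le _ _
    have h2 : T.card ≤ S.card := Finset.card_le_card hTsub
    rw [hs_def]
    exact_mod_cast le_trans h1 h2
  -- number of levels
  set L : ℕ := ⌈Real.logb 2 (2 * K ^ 2)⌉₊ with hL_def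
  have h2K2 : (1:ℝ) ≤ Real.logb 2 (2 * K ^ 2) := by
    rw [Real.le_logb_iff_rpow_le one_lt_two (by positivity), Real.rpow_one]
    nlinarith
  have hL1 : 1 ≤ L := by
    have : (1:ℝ) ≤ (L:ℝ) := le_trans h2K2 (Nat.le_ceil _)
    exact_mod_cast this
  have hLpos : (0:ℝ) < (L:ℝ) := by exact_mod_cast hL1
  have hLub : (L : ℝ) ≤ Real.logb 2 (4 * K ^ 2) := by
    have h1 : (L:ℝ) < Real.logb 2 (2*K^2) + 1 :=
      Nat.ceil_lt_add_one (by linarith)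
    have h2 : Real.logb 2 (4*K^2) = Real.logb 2 (2*K^2) + 1 := by
      rw [show (4:ℝ)*K^2 = 2*(2*K^2) by ring]
      rw [Real.logb_mul two_ne_zero (by positivity), Real.logb_self_eq_one one_lt_two]
      ring
    linarith
  have h2L : 2 * K ^ 2 ≤ (2:ℝ) ^ L := by
    have h := Nat.le_ceil (Real.logb 2 (2*K^2))
    rw [← hL_def, Real.logb_le_iff_le_rpow one_lt_two (by positivity),
      Real.rpow_natCast] at h
    exact h
  -- the top level set
  set XL : Finset Z := S.filter (fun x => s / 2 ^ L ≤ (f x : ℝ)) with hXL_def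
  have hone_le : (1:ℝ) ≤ K ^ (β - ε + 1) := by
    have h := Real.rpow_le_rpow_of_exponent_le (le_of_lt hK1) (show (0:ℝ) ≤ β - ε + 1 by linarith)
    rwa [Real.rpow_zero] at h
  have hrem : ∑ x ∈ S \ XL, (f x:ℝ) ≤ (1/2) * (K ^ (β - ε) * s * n) := by
    have step1 : ∑ x ∈ S \ XL, (f x:ℝ) ≤ ((S \ XL).card : ℝ) * (s / 2^L) := by
      rw [← nsmul_eq_mul]
      refine Finset.sum_le_card_nsmul _ _ _ fun x hx => ?_
      have hx' := Finset.mem_sdiff.mp hx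
      have hnot : ¬ (s/2^L ≤ (f x:ℝ)) := fun h => hx'.2 (Finset.mem_filter.mpr ⟨hx'.1, h⟩)
      linarith
    have step2 : ((S \ XL).card : ℝ) * (s / 2^L) ≤ s * (s / 2^L) := by
      apply mul_le_mul_of_nonneg_right _ (by positivity)
      rw [hs_def]
      exact_mod_cast Finset.card_le_card (Finset.sdiff_subset (s := S) (t := XL))
    have step3 : s * (s / 2^L) ≤ s * (s / (2*K^2)) := by
      apply mul_le_mul_of_nonneg_left _ (le_of_lt hs0)
      apply div_le_div_of_nonneg_left (le_of_lt hs0) (by positivity) h2L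
    have step4 : s * (s / (2*K^2)) ≤ (1/2) * (K ^ (β - ε) * s * n) := by
      rw [hsKn]
      have expand : K*n * (K*n / (2*K^2)) = (1/2) * (n * n) := by
        field_simp
      rw [expand]
      have h1 : (1:ℝ) * (n*n) ≤ K ^ (β - ε + 1) * (n * n) := by
        apply mul_le_mul_of_nonneg_right hone_le (by positivity)
      have h2 : K ^ (β - ε + 1) = K ^ (β - ε) * K := by
        rw [Real.rpow_add hK0, Real.rpow_one]
      nlinarith
    linarith
  have hXLsum : (1/2) * (K ^ (β - ε) * s * n) ≤ ∑ x ∈ XL, (f x:ℝ) := by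
    have hsplit : ∑ x ∈ S \ XL, (f x:ℝ) + ∑ x ∈ XL, (f x:ℝ) = ∑ x ∈ S, (f x:ℝ) :=
      Finset.sum_sdiff (Finset.filter_subset _ _)
    have htotal' : K ^ (β - ε) * s * n ≤ ∑ x ∈ S, (f x:ℝ) := by
      refine le_trans htotal ?_
      rw [Nat.cast_sum]
    linarith
  -- the levels
  set Y : ℕ → Finset Z := fun i =>
    if i = 1 then S.filter (fun x => s / 2 ≤ (f x:ℝ))
    else S.filter (fun x => s / 2^i ≤ (f x:ℝ) ∧ (f x:ℝ) < s / 2^(i-1)) with hY_def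
  have hYsubS : ∀ i, Y i ⊆ S := fun i => by
    rw [hY_def]; dsimp only; split_ifs <;> exact Finset.filter_subset _ _
  have hcover : XL ⊆ (Finset.Icc 1 L).biUnion Y := by
    intro x hx
    obtain ⟨hxS, hxf⟩ := Finset.mem_filter.mp hx
    by_cases h1 : s/2 ≤ (f x:ℝ)
    · refine Finset.mem_biUnion.mpr ⟨1, Finset.mem_Icc.mpr ⟨le_refl 1, hL1⟩, ?_⟩
      rw [hY_def]
      simp only [if_pos rfl]
      exact Finset.mem_filter.mpr ⟨hxS, h1⟩
    · have hex : ∃ i : ℕ, s/2^i ≤ (f x:ℝ) := ⟨L, hxf⟩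
      have hile : Nat.find hex ≤ L := Nat.find_min' hex hxf
      set i := Nat.find hex with hi_def
      have hspec : s/2^i ≤ (f x:ℝ) := Nat.find_spec hex
      have hne0 : i ≠ 0 := by
        intro h0
        rw [h0] at hspec
        simp only [pow_zero] at hspec
        apply h1
        have : s/2 ≤ s/1 := by
          apply div_le_div_of_nonneg_left (le_of_lt hs0) (by norm_num) (by norm_num)
        simp only [div_one] at this
        linarith
      have hne1 : i ≠ 1 := by
        intro h0
        apply h1
        rw [h0] at hspec
        simpa using hspec
      have hi2 : 2 ≤ i := by omega
      have hmin : ¬ (s/2^(i-1) ≤ (f x:ℝ)) := Nat.find_min hex (by omega)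
      refine Finset.mem_biUnion.mpr ⟨i, Finset.mem_Icc.mpr ⟨by omega, hile⟩, ?_⟩
      rw [hY_def]
      simp only [if_neg hne1]
      exact Finset.mem_filter.mpr ⟨hxS, hspec, by linarith⟩
  -- pigeonhole over levels
  have hXLsum_le : ∑ x ∈ XL, f x ≤ ∑ i ∈ Finset.Icc 1 L, ∑ x ∈ Y i, f x :=
    le_trans (Finset.sum_le_sum_of_subset hcover) (sum_biUnion_le'' _ _ _)
  obtain ⟨i, hiIcc, hi⟩ : ∃ i ∈ Finset.Icc 1 L,
      (1/2) * (K ^ (β-ε) * s * n) / (L:ℝ) ≤ ∑ x ∈ Y i, (f x:ℝ) := by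
    apply Finset.exists_le_of_sum_le ⟨1, Finset.mem_Icc.mpr ⟨le_refl 1, hL1⟩⟩
    have hc : ∑ _j ∈ Finset.Icc 1 L, ((1/2) * (K ^ (β-ε) * s * n) / (L:ℝ))
        = (1/2) * (K ^ (β-ε) * s * n) := by
      rw [Finset.sum_const, nsmul_eq_mul, Nat.card_Icc]
      simp only [Nat.add_sub_cancel]
      rw [mul_comm, div_mul_cancel₀ _ (ne_of_gt hLpos)]
    rw [hc]
    calc (1/2) * (K ^ (β-ε) * s * n) ≤ ∑ x ∈ XL, (f x:ℝ) := hXLsum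
      _ ≤ ∑ j ∈ Finset.Icc 1 L, ∑ x ∈ Y j, (f x:ℝ) := by exact_mod_cast hXLsum_le
  obtain ⟨hi1, hiL⟩ := Finset.mem_Icc.mp hiIcc
  have hYub : ∀ x ∈ Y i, (f x:ℝ) ≤ s / 2^(i-1) := by
    intro x hx
    by_cases h1 : i = 1
    · subst h1
      simpa using hfle x
    · rw [hY_def] at hx
      dsimp only at hx
      rw [if_neg h1] at hx
      exact le_of_lt (Finset.mem_filter.mp hx).2.2
  have hYlb : ∀ x ∈ Y i, s / 2^i ≤ (f x:ℝ) := by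
    intro x hx
    rw [hY_def] at hx
    dsimp only at hx
    by_cases h1 : i = 1
    · subst h1
      rw [if_pos rfl] at hx
      have h := (Finset.mem_filter.mp hx).2
      rw [pow_one]
      exact h
    · rw [if_neg h1] at hx
      exact (Finset.mem_filter.mp hx).2.1
  have hYsum_ub : ∑ x ∈ Y i, (f x:ℝ) ≤ ((Y i).card : ℝ) * (s / 2^(i-1)) := by
    rw [← nsmul_eq_mul]
    exact Finset.sum_le_card_nsmul _ _ _ hYub
  have hYcard : (1/2) * (K ^ (β-ε) * s * n) / (L:ℝ) ≤ ((Y i).card:ℝ) * (s / 2^(i-1)) :=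
    le_trans hi hYsum_ub
  have hlogpos : 0 < Real.logb K 2 := Real.logb_pos hK1 one_lt_two
  refine ⟨1 + ε - β - (i:ℝ) * Real.logb K 2, Y i, ?_, hYsubS i, ?_, ?_⟩
  · have hi1' : (1:ℝ) ≤ (i:ℝ) := by exact_mod_cast hi1
    nlinarith
  · intro x hx
    have hid : K ^ ((1 + ε - β - (i:ℝ) * Real.logb K 2) + β - ε) * n = s / 2^i := by
      rw [show (1 + ε - β - (i:ℝ) * Real.logb K 2) + β - ε = 1 - (i:ℝ)*Real.logb K 2 by ring]
      rw [Real.rpow_sub hK0, Real.rpow_one]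
      rw [mul_comm (i:ℝ), Real.rpow_mul (le_of_lt hK0), Real.rpow_logb hK0 hKne1 two_pos,
        Real.rpow_natCast]
      rw [hsKn]
      ring
    exact le_trans (le_of_eq hid) (hYlb x hx)
  · have hq : (0:ℝ) < (2:ℝ)^(i-1) := by positivity
    have h2i : (2:ℝ)^i = 2 * 2^(i-1) := by
      rw [← pow_succ']
      congr 1
      omega
    have hidm : K ^ (-(1 + ε - β - (i:ℝ) * Real.logb K 2)) = K ^ (β-ε) / K * 2^i := by
      rw [show -(1 + ε - β - (i:ℝ) * Real.logb K 2) = (β - ε - 1) + (i:ℝ)*Real.logb K 2 by ring]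
      rw [Real.rpow_add hK0, Real.rpow_sub hK0, Real.rpow_one]
      rw [mul_comm (i:ℝ), Real.rpow_mul (le_of_lt hK0), Real.rpow_logb hK0 hKne1 two_pos,
        Real.rpow_natCast]
    have hYc0 : (0:ℝ) ≤ ((Y i).card:ℝ) := Nat.cast_nonneg _
    have hkey : (1/2) * (K ^ (β-ε) * n * 2^(i-1)) ≤ ((Y i).card:ℝ) * (L:ℝ) := by
      have h' : (1/2) * (K ^ (β-ε) * s * n) ≤ ((Y i).card:ℝ) * (s / 2^(i-1)) * (L:ℝ) := by
        rw [div_le_iff₀ hLpos] at hYcard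
        exact hYcard
      have h'' := mul_le_mul_of_nonneg_right h' (le_of_lt hq)
      have e1 : ((Y i).card:ℝ) * (s / 2^(i-1)) * (L:ℝ) * 2^(i-1)
          = (((Y i).card:ℝ) * (L:ℝ)) * s := by
        have hsq := div_mul_cancel₀ s (ne_of_gt hq)
        calc _ = ((Y i).card:ℝ) * (L:ℝ) * (s / 2^(i-1) * 2^(i-1)) := by ring
          _ = _ := by rw [hsq]
      rw [e1] at h''
      have e2 : (1/2) * (K ^ (β-ε) * s * n) * 2^(i-1)
          = ((1/2) * (K ^ (β-ε) * n * 2^(i-1))) * s := by ring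
      rw [e2] at h''
      exact le_of_mul_le_mul_right h'' hs0
    have hlog : (0:ℝ) < Real.logb 2 (4*K^2) := lt_of_lt_of_le hLpos hLub
    rw [hidm, hsKn, div_le_iff₀ (by positivity)]
    have hYL : ((Y i).card:ℝ) * (L:ℝ) ≤ ((Y i).card:ℝ) * Real.logb 2 (4*K^2) :=
      mul_le_mul_of_nonneg_left hLub hYc0
    have e3 : K ^ (β-ε) / K * 2^i * (K * n) = 4 * ((1/2) * (K ^ (β-ε) * n * 2^(i-1))) := by
      rw [h2i]
      field_simp
      ring
    rw [e3]
    nlinarith [hkey, hYL]
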